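/- Let ℓ ≥ 1 and let α, β, γ be partitions of n with at most ℓ parts. Then g(α,β,γ) = ∑_{σ¹,σ²,σ³ ∈ S_ℓ} sgn(σ¹)·sgn(σ²)·sgn(σ³) · C(a(σ¹), b(σ²), c(σ³)), where the sum is over all triples of permutations of {1,…,ℓ}, and where a(σ)_i = α_i + σ(i) − i, b(σ)_j = β_j + σ(j) − j, and c(σ)_k = γ_k + σ(k) − k for 1 ≤ i, j, k ≤ ℓ. -/

import Mathlib

open Finset

/-- A partition with at most `ℓ` parts: a weakly decreasing tuple of naturals. -/
def IsPartition {ℓ : ℕ} (lam : Fin ℓ → ℕ) : Prop :=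
  ∀ i j : Fin ℓ, i ≤ j → lam j ≤ lam i

/-- The index type for the `3ℓ` variables `x_1,…,x_ℓ,y_1,…,y_ℓ,z_1,…,z_ℓ`. -/
abbrev KVar (ℓ : ℕ) := Fin ℓ ⊕ (Fin ℓ ⊕ Fin ℓ)

noncomputable section

/-- The variable `x_i`. -/
def Xv (ℓ : ℕ) (i : Fin ℓ) : MvPowerSeries (KVar ℓ) ℤ := MvPowerSeries.X (Sum.inl i)

/-- The variable `y_j`. -/
def Yv (ℓ : ℕ) (j : Fin ℓ) : MvPowerSeries (KVar ℓ) ℤ := MvPowerSeries.X (Sum.inr (Sum.inl j))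

/-- The variable `z_k`. -/
def Zv (ℓ : ℕ) (k : Fin ℓ) : MvPowerSeries (KVar ℓ) ℤ := MvPowerSeries.X (Sum.inr (Sum.inr k))

/-- The Vandermonde product `∏_{i<j} (v i - v j)`. -/
def vdm (ℓ : ℕ) (v : Fin ℓ → MvPowerSeries (KVar ℓ) ℤ) : MvPowerSeries (KVar ℓ) ℤ :=
  ∏ i : Fin ℓ, ∏ j : Fin ℓ, if i < j then v i - v j else 1

/-- The Cauchy kernel `∏_{i,j,k} (1 - x_i y_j z_k)⁻¹`. -/
def cauchyKernel (ℓ : ℕ) : MvPowerSeries (KVar ℓ) ℤ :=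
  ∏ i : Fin ℓ, ∏ j : Fin ℓ, ∏ k : Fin ℓ,
    MvPowerSeries.invOfUnit (1 - Xv ℓ i * Yv ℓ j * Zv ℓ k) 1

/-- The truncated Cauchy kernel `∏_{i,j,k} (1 + x_iy_jz_k + ⋯ + (x_iy_jz_k)^D)`. -/
def truncKernel (ℓ D : ℕ) : MvPowerSeries (KVar ℓ) ℤ :=
  ∏ i : Fin ℓ, ∏ j : Fin ℓ, ∏ k : Fin ℓ,
    ∑ d ∈ Finset.range (D + 1), (Xv ℓ i * Yv ℓ j * Zv ℓ k) ^ d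

/-- The exponent vector of the monomial `∏ x_i^{a_i} ∏ y_j^{b_j} ∏ z_k^{c_k}`. -/
def expVec3 (ℓ : ℕ) (a b c : Fin ℓ → ℕ) : KVar ℓ →₀ ℕ :=
  Finsupp.equivFunOnFinite.symm (Sum.elim a (Sum.elim b c))

/-- The staircase-shifted exponent vector of
`∏ x_i^{λ_i+ℓ-i} ∏ y_j^{μ_j+ℓ-j} ∏ z_k^{ν_k+ℓ-k}` (here `i,j,k` are 0-based). -/
def kronExp (ℓ : ℕ) (lam mu nu : Fin ℓ → ℕ) : KVar ℓ →₀ ℕ :=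
  expVec3 ℓ (fun i => lam i + (ℓ - 1 - (i : ℕ))) (fun j => mu j + (ℓ - 1 - (j : ℕ)))
    (fun k => nu k + (ℓ - 1 - (k : ℕ)))

/-- The Kronecker coefficient `g(λ,μ,ν)`, defined as the coefficient of the monomial
`∏ x_i^{λ_i+ℓ-i} ∏ y_j^{μ_j+ℓ-j} ∏ z_k^{ν_k+ℓ-k}` in
`Δ(x)Δ(y)Δ(z) ∏_{i,j,k} (1-x_iy_jz_k)⁻¹`. -/
def kron (ℓ : ℕ) (lam mu nu : Fin ℓ → ℕ) : ℤ :=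
  MvPowerSeries.coeff (kronExp ℓ lam mu nu)
    (vdm ℓ (Xv ℓ) * vdm ℓ (Yv ℓ) * vdm ℓ (Zv ℓ) * cauchyKernel ℓ)

end

/-- `C(a,b,c)`: the number of 3-dimensional contingency arrays with 2-way
marginals `a`, `b`, `c`. -/
noncomputable def contCount (ℓ : ℕ) (a b c : Fin ℓ → ℤ) : ℕ :=
  Set.ncard {x : Fin ℓ → Fin ℓ → Fin ℓ → ℕ |
    (∀ i, (∑ j, ∑ k, (x i j k : ℤ)) = a i) ∧
    (∀ j, (∑ i, ∑ k, (x i j k : ℤ)) = b j) ∧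
    (∀ k, (∑ i, ∑ j, (x i j k : ℤ)) = c k)}


set_option maxHeartbeats 1600000
section Aux
open Finset MvPowerSeries Equiv Classical
noncomputable section
variable {σ : Type*}

/-- Geometric series with ratio `monomial m 1`. -/
def geomSeries (m : σ →₀ ℕ) : MvPowerSeries σ ℤ :=
  fun e => if ∃ d : ℕ, e = d • m then 1 else 0

lemma coeff_geomSeries (m e : σ →₀ ℕ) :
    coeff e (geomSeries m) = if ∃ d : ℕ, e = d • m then 1 else 0 := rfl

lemma one_sub_mul_geomSeries (m : σ →₀ ℕ) (hm : m ≠ 0) :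
    (1 - monomial m 1) * geomSeries m = 1 := by
  classical
  ext e
  rw [sub_mul, one_mul, map_sub, coeff_monomial_mul, coeff_one]
  simp only [coeff_geomSeries, one_mul]
  by_cases he : e = 0
  · subst he
    rw [if_pos ⟨0, by simp⟩, if_neg, if_pos rfl, sub_zero]
    intro hle
    exact hm (le_antisymm hle (zero_le : 0 ≤ m))
  · rw [if_neg he]
    by_cases hd : ∃ d : ℕ, e = d • m
    · obtain ⟨d, rfl⟩ := hd
      match d with
      | 0 => simp at he
      | (d+1) =>
        have hle : m ≤ (d+1) • m := by
          rw [succ_nsmul]; exact le_add_self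
        have hsub : (d+1) • m - m = d • m := by
          rw [succ_nsmul, add_tsub_cancel_right]
        rw [if_pos ⟨d+1, rfl⟩, if_pos hle, if_pos ⟨d, hsub⟩, sub_self]
    · rw [if_neg hd]
      by_cases hle : m ≤ e
      · rw [if_pos hle, if_neg, sub_zero]
        rintro ⟨d, hd'⟩
        exact hd ⟨d + 1, by rw [succ_nsmul, ← hd', tsub_add_cancel_of_le hle]⟩
      · rw [if_neg hle]; ring

lemma geomSeries_eq_invOfUnit (m : σ →₀ ℕ) (hm : m ≠ 0) :
    invOfUnit (1 - monomial m 1) 1 = geomSeries m := by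
  have hc : (constantCoeff : MvPowerSeries σ ℤ →+* ℤ) (1 - monomial m 1) = ((1 : ℤˣ) : ℤ) := by
    rw [map_sub, map_one, ← coeff_zero_eq_constantCoeff_apply, coeff_monomial]
    simp [Ne.symm hm]
  have h1 : (1 - monomial m (1:ℤ)) * invOfUnit (1 - monomial m (1:ℤ)) 1 = 1 :=
    mul_invOfUnit _ _ hc
  have h2 := one_sub_mul_geomSeries m hm
  calc invOfUnit (1 - monomial m 1) 1
      = ((1 - monomial m 1) * geomSeries m) * invOfUnit (1 - monomial m 1) 1 := by
        rw [h2, one_mul]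
    _ = geomSeries m * ((1 - monomial m 1) * invOfUnit (1 - monomial m 1) 1) := by ring
    _ = geomSeries m := by rw [h1, mul_one]

/-- The exponent of the monomial `x_i y_j z_k`. -/
def mono3 (ℓ : ℕ) (t : Fin ℓ × Fin ℓ × Fin ℓ) : KVar ℓ →₀ ℕ :=
  Finsupp.single (Sum.inl t.1) 1 + Finsupp.single (Sum.inr (Sum.inl t.2.1)) 1 +
    Finsupp.single (Sum.inr (Sum.inr t.2.2)) 1

lemma mono3_apply_inl (ℓ : ℕ) (t : Fin ℓ × Fin ℓ × Fin ℓ) (i : Fin ℓ) :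
    mono3 ℓ t (Sum.inl i) = if t.1 = i then 1 else 0 := by
  simp [mono3, Finsupp.single_apply]

lemma mono3_apply_inrl (ℓ : ℕ) (t : Fin ℓ × Fin ℓ × Fin ℓ) (j : Fin ℓ) :
    mono3 ℓ t (Sum.inr (Sum.inl j)) = if t.2.1 = j then 1 else 0 := by
  simp [mono3, Finsupp.single_apply]

lemma mono3_apply_inrr (ℓ : ℕ) (t : Fin ℓ × Fin ℓ × Fin ℓ) (k : Fin ℓ) :
    mono3 ℓ t (Sum.inr (Sum.inr k)) = if t.2.2 = k then 1 else 0 := by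
  simp [mono3, Finsupp.single_apply]

lemma mono3_ne_zero (ℓ : ℕ) (t : Fin ℓ × Fin ℓ × Fin ℓ) : mono3 ℓ t ≠ 0 := by
  intro h
  have := congrFun (congrArg (⇑) h) (Sum.inl t.1)
  rw [mono3_apply_inl] at this
  simp at this

lemma XYZ_eq_monomial (ℓ : ℕ) (i j k : Fin ℓ) :
    Xv ℓ i * Yv ℓ j * Zv ℓ k = monomial (mono3 ℓ (i, j, k)) 1 := by
  simp [Xv, Yv, Zv, MvPowerSeries.X, monomial_mul_monomial, mono3]

lemma expVec3_apply_inl (ℓ : ℕ) (a b c : Fin ℓ → ℕ) (i : Fin ℓ) :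
    expVec3 ℓ a b c (Sum.inl i) = a i := rfl
lemma expVec3_apply_inrl (ℓ : ℕ) (a b c : Fin ℓ → ℕ) (j : Fin ℓ) :
    expVec3 ℓ a b c (Sum.inr (Sum.inl j)) = b j := rfl
lemma expVec3_apply_inrr (ℓ : ℕ) (a b c : Fin ℓ → ℕ) (k : Fin ℓ) :
    expVec3 ℓ a b c (Sum.inr (Sum.inr k)) = c k := rfl

lemma cauchyKernel_eq_prod (ℓ : ℕ) :
    cauchyKernel ℓ = ∏ t : Fin ℓ × Fin ℓ × Fin ℓ, geomSeries (mono3 ℓ t) := by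
  rw [cauchyKernel, Fintype.prod_prod_type]
  refine Finset.prod_congr rfl fun i _ => ?_
  rw [Fintype.prod_prod_type]
  refine Finset.prod_congr rfl fun j _ => Finset.prod_congr rfl fun k _ => ?_
  rw [XYZ_eq_monomial, geomSeries_eq_invOfUnit _ (mono3_ne_zero ℓ (i,j,k))]

lemma coeff_cauchyKernel_card (ℓ : ℕ) (e : KVar ℓ →₀ ℕ) :
    coeff e (cauchyKernel ℓ) =
      (((Finset.univ : Finset (Fin ℓ × Fin ℓ × Fin ℓ)).finsuppAntidiag e).filter
        (fun l => ∀ t, ∃ d : ℕ, l t = d • mono3 ℓ t)).card := by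
  classical
  rw [cauchyKernel_eq_prod, coeff_prod]
  rw [← Finset.sum_boole]
  refine Finset.sum_congr rfl fun l _ => ?_
  simp only [coeff_geomSeries]
  rw [Fintype.prod_boole]
end

noncomputable section
variable {ℓ : ℕ}

lemma marg_sum_a (d : Fin ℓ × Fin ℓ × Fin ℓ → ℕ) (i : Fin ℓ) :
    ∑ t : Fin ℓ × Fin ℓ × Fin ℓ, d t * (mono3 ℓ t (Sum.inl i)) = ∑ j, ∑ k, d (i, j, k) := by
  simp only [mono3_apply_inl, mul_ite, mul_one, mul_zero]
  rw [Fintype.sum_prod_type]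
  have h : ∀ i' : Fin ℓ, (∑ p : Fin ℓ × Fin ℓ, if i' = i then d (i', p) else 0)
      = if i' = i then ∑ p : Fin ℓ × Fin ℓ, d (i', p) else 0 := by
    intro i'; split_ifs <;> simp
  rw [Finset.sum_congr rfl fun i' _ => h i', Finset.sum_ite_eq' univ i]
  simp [Fintype.sum_prod_type]

lemma marg_sum_b (d : Fin ℓ × Fin ℓ × Fin ℓ → ℕ) (j : Fin ℓ) :
    ∑ t : Fin ℓ × Fin ℓ × Fin ℓ, d t * (mono3 ℓ t (Sum.inr (Sum.inl j))) =
      ∑ i, ∑ k, d (i, j, k) := by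
  simp only [mono3_apply_inrl, mul_ite, mul_one, mul_zero]
  rw [Fintype.sum_prod_type]
  refine Finset.sum_congr rfl fun i _ => ?_
  rw [Fintype.sum_prod_type]
  have h : ∀ j' : Fin ℓ, (∑ k : Fin ℓ, if j' = j then d (i, j', k) else 0)
      = if j' = j then ∑ k : Fin ℓ, d (i, j', k) else 0 := by
    intro j'; split_ifs <;> simp
  rw [Finset.sum_congr rfl fun j' _ => h j', Finset.sum_ite_eq' univ j]
  simp

lemma marg_sum_c (d : Fin ℓ × Fin ℓ × Fin ℓ → ℕ) (k : Fin ℓ) :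
    ∑ t : Fin ℓ × Fin ℓ × Fin ℓ, d t * (mono3 ℓ t (Sum.inr (Sum.inr k))) =
      ∑ i, ∑ j, d (i, j, k) := by
  simp only [mono3_apply_inrr, mul_ite, mul_one, mul_zero]
  rw [Fintype.sum_prod_type]
  refine Finset.sum_congr rfl fun i _ => ?_
  rw [Fintype.sum_prod_type]
  refine Finset.sum_congr rfl fun j _ => ?_
  rw [Finset.sum_ite_eq' univ k]
  simp

lemma self_smul_of_exists (l : (Fin ℓ × Fin ℓ × Fin ℓ) →₀ (KVar ℓ →₀ ℕ))
    (t : Fin ℓ × Fin ℓ × Fin ℓ) (h : ∃ d : ℕ, l t = d • mono3 ℓ t) :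
    l t = (l t (Sum.inl t.1)) • mono3 ℓ t := by
  obtain ⟨d, hd⟩ := h
  rw [hd, Finsupp.smul_apply, mono3_apply_inl, if_pos rfl]
  simp

end


section Count
variable {ℓ : ℕ}

/-- Read off the array from an antidiagonal decomposition. -/
def Phi3 (l : (Fin ℓ × Fin ℓ × Fin ℓ) →₀ (KVar ℓ →₀ ℕ)) : Fin ℓ → Fin ℓ → Fin ℓ → ℕ :=
  fun i j k => l (i, j, k) (Sum.inl i)

lemma card_filter_eq_contCount (a b c : Fin ℓ → ℕ) :
    (((Finset.univ : Finset (Fin ℓ × Fin ℓ × Fin ℓ)).finsuppAntidiag (expVec3 ℓ a b c)).filter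
      (fun l => ∀ t, ∃ d : ℕ, l t = d • mono3 ℓ t)).card
    = contCount ℓ (fun i => (a i : ℤ)) (fun j => (b j : ℤ)) (fun k => (c k : ℤ)) := by
  classical
  set A := (((Finset.univ : Finset (Fin ℓ × Fin ℓ × Fin ℓ)).finsuppAntidiag
      (expVec3 ℓ a b c)).filter (fun l => ∀ t, ∃ d : ℕ, l t = d • mono3 ℓ t)) with hA
  -- membership unfolding
  have hmem : ∀ l, l ∈ A ↔
      (∑ t : Fin ℓ × Fin ℓ × Fin ℓ, l t = expVec3 ℓ a b c) ∧
      (∀ t, ∃ d : ℕ, l t = d • mono3 ℓ t) := by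
    intro l
    rw [hA, Finset.mem_filter, Finset.mem_finsuppAntidiag]
    constructor
    · rintro ⟨⟨h1, _⟩, h3⟩; exact ⟨h1, h3⟩
    · rintro ⟨h1, h3⟩; exact ⟨⟨h1, Finset.subset_univ _⟩, h3⟩
  -- sums of l evaluated at variables
  have key : ∀ l ∈ A, ∀ s : KVar ℓ,
      (expVec3 ℓ a b c) s = ∑ t : Fin ℓ × Fin ℓ × Fin ℓ, l t (Sum.inl t.1) * mono3 ℓ t s := by
    intro l hl s
    obtain ⟨h1, h3⟩ := (hmem l).1 hl
    calc (expVec3 ℓ a b c) s = (∑ t : Fin ℓ × Fin ℓ × Fin ℓ, l t) s := by rw [h1]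
      _ = ∑ t : Fin ℓ × Fin ℓ × Fin ℓ, l t s := by rw [Finset.sum_apply']
      _ = ∑ t : Fin ℓ × Fin ℓ × Fin ℓ, l t (Sum.inl t.1) * mono3 ℓ t s := by
          refine Finset.sum_congr rfl fun t _ => ?_
          conv_lhs => rw [self_smul_of_exists l t (h3 t)]
          rw [Finsupp.smul_apply]; simp
  have himage : {x : Fin ℓ → Fin ℓ → Fin ℓ → ℕ |
      (∀ i, (∑ j, ∑ k, (x i j k : ℤ)) = ((a i : ℤ))) ∧
      (∀ j, (∑ i, ∑ k, (x i j k : ℤ)) = ((b j : ℤ))) ∧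
      (∀ k, (∑ i, ∑ j, (x i j k : ℤ)) = ((c k : ℤ)))} = Phi3 '' ↑A := by
    ext x
    simp only [Set.mem_setOf_eq, Set.mem_image, Finset.mem_coe]
    constructor
    · rintro ⟨ha, hb, hc⟩
      replace ha : ∀ i, ∑ j, ∑ k, x i j k = a i := by
        intro i; exact_mod_cast (by push_cast; exact ha i : ((∑ j, ∑ k, x i j k : ℕ) : ℤ) = (a i : ℤ))
      replace hb : ∀ j, ∑ i, ∑ k, x i j k = b j := by
        intro j; exact_mod_cast (by push_cast; exact hb j : ((∑ i, ∑ k, x i j k : ℕ) : ℤ) = (b j : ℤ))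
      replace hc : ∀ k, ∑ i, ∑ j, x i j k = c k := by
        intro k; exact_mod_cast (by push_cast; exact hc k : ((∑ i, ∑ j, x i j k : ℕ) : ℤ) = (c k : ℤ))
      refine ⟨Finsupp.equivFunOnFinite.symm (fun t => x t.1 t.2.1 t.2.2 • mono3 ℓ t), ?_, ?_⟩
      · rw [hmem]
        constructor
        · ext s
          rw [Finset.sum_apply']
          have : ∀ t : Fin ℓ × Fin ℓ × Fin ℓ,
              (Finsupp.equivFunOnFinite.symm (fun t => x t.1 t.2.1 t.2.2 • mono3 ℓ t)) t s
              = x t.1 t.2.1 t.2.2 * mono3 ℓ t s := by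
            intro t; simp [Finsupp.equivFunOnFinite]
          rw [Finset.sum_congr rfl fun t _ => this t]
          cases s with
          | inl i => rw [marg_sum_a (fun t => x t.1 t.2.1 t.2.2) i, expVec3_apply_inl]; exact ha i
          | inr s' => cases s' with
            | inl j => rw [marg_sum_b (fun t => x t.1 t.2.1 t.2.2) j, expVec3_apply_inrl]; exact hb j
            | inr k => rw [marg_sum_c (fun t => x t.1 t.2.1 t.2.2) k, expVec3_apply_inrr]; exact hc k
        · intro t
          exact ⟨x t.1 t.2.1 t.2.2, by simp [Finsupp.equivFunOnFinite]⟩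
      · funext i j k
        simp [Phi3, Finsupp.equivFunOnFinite, Finsupp.smul_apply, mono3_apply_inl]
    · rintro ⟨l, hl, rfl⟩
      obtain ⟨h1, h3⟩ := (hmem l).1 hl
      have hda : ∀ i, ∑ j, ∑ k, Phi3 l i j k = a i := by
        intro i
        have := key l hl (Sum.inl i)
        rw [expVec3_apply_inl, marg_sum_a (fun t => l t (Sum.inl t.1)) i] at this
        exact this.symm
      have hdbv : ∀ j, ∑ i, ∑ k, Phi3 l i j k = b j := by
        intro j
        have := key l hl (Sum.inr (Sum.inl j))
        rw [expVec3_apply_inrl, marg_sum_b (fun t => l t (Sum.inl t.1)) j] at this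
        exact this.symm
      have hdc : ∀ k, ∑ i, ∑ j, Phi3 l i j k = c k := by
        intro k
        have := key l hl (Sum.inr (Sum.inr k))
        rw [expVec3_apply_inrr, marg_sum_c (fun t => l t (Sum.inl t.1)) k] at this
        exact this.symm
      refine ⟨fun i => ?_, fun j => ?_, fun k => ?_⟩
      · rw [← hda i]; push_cast; rfl
      · rw [← hdbv j]; push_cast; rfl
      · rw [← hdc k]; push_cast; rfl
  have hinj : Set.InjOn Phi3 (A : Set ((Fin ℓ × Fin ℓ × Fin ℓ) →₀ (KVar ℓ →₀ ℕ))) := by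
    intro l1 h1 l2 h2 hphi
    obtain ⟨_, h13⟩ := (hmem l1).1 h1
    obtain ⟨_, h23⟩ := (hmem l2).1 h2
    ext t s
    rw [self_smul_of_exists l1 t (h13 t), self_smul_of_exists l2 t (h23 t)]
    have : l1 t (Sum.inl t.1) = l2 t (Sum.inl t.1) := by
      have := congrFun (congrFun (congrFun hphi t.1) t.2.1) t.2.2
      exact this
    rw [this]
  rw [contCount, himage, Set.ncard_image_of_injOn hinj, Set.ncard_coe_finset]



end Count

lemma coeff_cauchyKernel_expVec3 {ℓ : ℕ} (a b c : Fin ℓ → ℕ) :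
    MvPowerSeries.coeff (expVec3 ℓ a b c) (cauchyKernel ℓ) =
      (contCount ℓ (fun i => (a i : ℤ)) (fun j => (b j : ℤ)) (fun k => (c k : ℤ)) : ℤ) := by
  rw [coeff_cauchyKernel_card, card_filter_eq_contCount]

variable {R : Type*} [CommRing R]

lemma ite_prod_pairs {ℓ : ℕ} (f : Fin ℓ → Fin ℓ → R) :
    (∏ i : Fin ℓ, ∏ j : Fin ℓ, if i < j then f i j else 1)
      = ∏ p ∈ (univ ×ˢ univ : Finset (Fin ℓ × Fin ℓ)).filter (fun p => p.1 < p.2),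
          f p.1 p.2 := by
  rw [Finset.prod_filter, Finset.prod_product]

lemma det_vdm_rev {ℓ : ℕ} (v : Fin ℓ → R) :
    Matrix.det (Matrix.vandermonde (fun i => v (Fin.rev i)))
      = ∏ i : Fin ℓ, ∏ j : Fin ℓ, if i < j then v i - v j else 1 := by
  rw [Matrix.det_vandermonde]
  have h1 : ∀ i : Fin ℓ, (Finset.Ioi i) = univ.filter (fun j => i < j) := by
    intro i; ext j; simp
  calc (∏ i : Fin ℓ, ∏ j ∈ Finset.Ioi i, (v (Fin.rev j) - v (Fin.rev i)))
      = ∏ i : Fin ℓ, ∏ j : Fin ℓ, if i < j then v (Fin.rev j) - v (Fin.rev i) else 1 := by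
        refine Finset.prod_congr rfl fun i _ => ?_
        rw [h1 i, Finset.prod_filter]
    _ = ∏ p ∈ (univ ×ˢ univ : Finset (Fin ℓ × Fin ℓ)).filter (fun p => p.1 < p.2),
          (v (Fin.rev p.2) - v (Fin.rev p.1)) := ite_prod_pairs _
    _ = ∏ p ∈ (univ ×ˢ univ : Finset (Fin ℓ × Fin ℓ)).filter (fun p => p.1 < p.2),
          (v p.1 - v p.2) := by
        refine Finset.prod_nbij' (fun p => (Fin.rev p.2, Fin.rev p.1))
          (fun p => (Fin.rev p.2, Fin.rev p.1)) ?_ ?_ ?_ ?_ ?_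
        · intro p hp; simp only [Finset.mem_filter, Finset.mem_product] at hp ⊢
          exact ⟨⟨Finset.mem_univ _, Finset.mem_univ _⟩, Fin.rev_lt_rev.mpr hp.2⟩
        · intro p hp; simp only [Finset.mem_filter, Finset.mem_product] at hp ⊢
          exact ⟨⟨Finset.mem_univ _, Finset.mem_univ _⟩, Fin.rev_lt_rev.mpr hp.2⟩
        · intro p _; simp [Fin.rev_rev]
        · intro p _; simp [Fin.rev_rev]
        · intro p _; simp [Fin.rev_rev]
    _ = ∏ i : Fin ℓ, ∏ j : Fin ℓ, if i < j then v i - v j else 1 :=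
        (ite_prod_pairs (fun i j => v i - v j)).symm

/-- The involution `π ↦ rev ∘ π⁻¹ ∘ rev` on permutations. -/
def revConj (ℓ : ℕ) : Perm (Fin ℓ) ≃ Perm (Fin ℓ) where
  toFun π := Fin.revPerm * π⁻¹ * Fin.revPerm
  invFun π := Fin.revPerm * π⁻¹ * Fin.revPerm
  left_inv π := by
    ext x
    simp [Fin.rev_rev, Perm.mul_apply]
  right_inv π := by
    ext x
    simp [Fin.rev_rev, Perm.mul_apply]

lemma sign_revConj {ℓ : ℕ} (π : Perm (Fin ℓ)) :
    Perm.sign (revConj ℓ π) = Perm.sign π := by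
  simp only [revConj, Equiv.coe_fn_mk, map_mul, Perm.sign_inv]
  rw [mul_comm, ← mul_assoc, Int.units_mul_self, one_mul]

lemma vdm_expand {ℓ : ℕ} (v : Fin ℓ → R) :
    (∏ i : Fin ℓ, ∏ j : Fin ℓ, if i < j then v i - v j else 1)
      = ∑ σ : Perm (Fin ℓ), (Perm.sign σ : ℤ) • ∏ i : Fin ℓ, v i ^ (ℓ - 1 - (σ i : ℕ)) := by
  rw [← det_vdm_rev, Matrix.det_apply]
  refine Fintype.sum_equiv (revConj ℓ) _ _ fun π => ?_
  have hsign := sign_revConj π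
  rw [hsign]
  have hexp : ∀ j : Fin ℓ, ℓ - 1 - ((revConj ℓ π) j : ℕ) = ((π⁻¹ (Fin.rev j)) : ℕ) := by
    intro j
    have h1 : ((revConj ℓ π) j : ℕ) = (Fin.rev (π⁻¹ (Fin.rev j)) : ℕ) := rfl
    rw [h1, Fin.val_rev]
    have := (π⁻¹ (Fin.rev j)).isLt
    omega
  have hprod : (∏ i : Fin ℓ, Matrix.vandermonde (fun i => v (Fin.rev i)) (π i) i)
      = ∏ j : Fin ℓ, v j ^ (ℓ - 1 - ((revConj ℓ π) j : ℕ)) := by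
    simp only [Matrix.vandermonde_apply, hexp]
    refine Fintype.prod_equiv (π.trans Fin.revPerm) _ _ fun i => ?_
    simp [Fin.rev_rev]
  rw [hprod]
  norm_num [Units.smul_def]

section Neg
variable {ℓ : ℕ} (a b c : Fin ℓ → ℤ)

lemma contCount_eq_zero_a (h : ∃ i, a i < 0) : contCount ℓ a b c = 0 := by
  obtain ⟨i, hi⟩ := h
  unfold contCount
  convert Set.ncard_empty (Fin ℓ → Fin ℓ → Fin ℓ → ℕ) using 2
  ext x
  simp only [Set.mem_setOf_eq, Set.mem_empty_iff_false, iff_false]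
  rintro ⟨ha, -, -⟩
  have h0 : (0 : ℤ) ≤ ∑ j, ∑ k, (x i j k : ℤ) := by positivity
  rw [ha i] at h0
  omega

lemma contCount_eq_zero_b (h : ∃ j, b j < 0) : contCount ℓ a b c = 0 := by
  obtain ⟨j, hj⟩ := h
  unfold contCount
  convert Set.ncard_empty (Fin ℓ → Fin ℓ → Fin ℓ → ℕ) using 2
  ext x
  simp only [Set.mem_setOf_eq, Set.mem_empty_iff_false, iff_false]
  rintro ⟨-, hb, -⟩
  have h0 : (0 : ℤ) ≤ ∑ i, ∑ k, (x i j k : ℤ) := by positivity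
  rw [hb j] at h0
  omega

lemma contCount_eq_zero_c (h : ∃ k, c k < 0) : contCount ℓ a b c = 0 := by
  obtain ⟨k, hk⟩ := h
  unfold contCount
  convert Set.ncard_empty (Fin ℓ → Fin ℓ → Fin ℓ → ℕ) using 2
  ext x
  simp only [Set.mem_setOf_eq, Set.mem_empty_iff_false, iff_false]
  rintro ⟨-, -, hc⟩
  have h0 : (0 : ℤ) ≤ ∑ i, ∑ j, (x i j k : ℤ) := by positivity
  rw [hc k] at h0
  omega

end Neg

section Mono
variable {ℓ : ℕ}

lemma prod_monomial_one (s : Finset (Fin ℓ)) (e : Fin ℓ → (KVar ℓ →₀ ℕ)) :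
    (∏ i ∈ s, monomial (e i) (1:ℤ)) = monomial (∑ i ∈ s, e i) 1 := by
  classical
  induction s using Finset.induction_on with
  | empty => simp
  | insert _ _ h ih =>
    rw [Finset.prod_insert h, Finset.sum_insert h, ih, monomial_mul_monomial, one_mul]

lemma prod_X_pow (f : Fin ℓ → KVar ℓ) (g : Fin ℓ → ℕ) :
    (∏ i : Fin ℓ, (MvPowerSeries.X (f i) : MvPowerSeries (KVar ℓ) ℤ) ^ g i)
      = monomial (∑ i : Fin ℓ, Finsupp.single (f i) (g i)) 1 := by
  rw [← prod_monomial_one]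
  exact Finset.prod_congr rfl fun i _ => X_pow_eq (f i) (g i)

lemma expVec3_eq_sum_single (a b c : Fin ℓ → ℕ) :
    expVec3 ℓ a b c = (∑ i : Fin ℓ, Finsupp.single (Sum.inl i : KVar ℓ) (a i))
      + (∑ j : Fin ℓ, Finsupp.single (Sum.inr (Sum.inl j) : KVar ℓ) (b j))
      + (∑ k : Fin ℓ, Finsupp.single (Sum.inr (Sum.inr k) : KVar ℓ) (c k)) := by
  classical
  ext s
  rw [Finsupp.add_apply, Finsupp.add_apply, Finset.sum_apply', Finset.sum_apply',
    Finset.sum_apply']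
  simp only [Finsupp.single_apply]
  cases s with
  | inl i =>
    rw [expVec3_apply_inl]
    simp [Finset.sum_ite_eq]
  | inr s' => cases s' with
    | inl j =>
      rw [expVec3_apply_inrl]
      simp [Finset.sum_ite_eq]
    | inr k =>
      rw [expVec3_apply_inrr]
      simp [Finset.sum_ite_eq]

lemma triple_prod_monomial (a b c : Fin ℓ → ℕ) :
    (∏ i : Fin ℓ, Xv ℓ i ^ a i) * (∏ j : Fin ℓ, Yv ℓ j ^ b j) * (∏ k : Fin ℓ, Zv ℓ k ^ c k)
      = monomial (expVec3 ℓ a b c) 1 := by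
  simp only [Xv, Yv, Zv]
  rw [prod_X_pow, prod_X_pow, prod_X_pow, monomial_mul_monomial, monomial_mul_monomial,
    expVec3_eq_sum_single, one_mul, one_mul]

lemma expVec3_le_iff (a b c a' b' c' : Fin ℓ → ℕ) :
    expVec3 ℓ a b c ≤ expVec3 ℓ a' b' c' ↔
      (∀ i, a i ≤ a' i) ∧ (∀ j, b j ≤ b' j) ∧ (∀ k, c k ≤ c' k) := by
  rw [Finsupp.le_def]
  constructor
  · intro h
    exact ⟨fun i => h (Sum.inl i), fun j => h (Sum.inr (Sum.inl j)),
      fun k => h (Sum.inr (Sum.inr k))⟩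
  · rintro ⟨h1, h2, h3⟩ s
    rcases s with i | j | k
    · exact h1 i
    · exact h2 j
    · exact h3 k

lemma expVec3_sub (a b c a' b' c' : Fin ℓ → ℕ) :
    expVec3 ℓ a' b' c' - expVec3 ℓ a b c
      = expVec3 ℓ (fun i => a' i - a i) (fun j => b' j - b j) (fun k => c' k - c k) := by
  ext s
  rw [Finsupp.tsub_apply]
  rcases s with i | j | k <;> rfl

end Mono

lemma triple_sum_swap {P M : Type*} [Fintype P] [AddCommMonoid M]
    (G : P → P → P → M) :
    (∑ a : P, ∑ b : P, ∑ c : P, G c b a) = ∑ a : P, ∑ b : P, ∑ c : P, G a b c :=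
  calc (∑ a : P, ∑ b : P, ∑ c : P, G c b a)
      = ∑ b : P, ∑ a : P, ∑ c : P, G c b a := Finset.sum_comm
    _ = ∑ b : P, ∑ c : P, ∑ a : P, G c b a :=
        Finset.sum_congr rfl fun b _ => Finset.sum_comm
    _ = ∑ c : P, ∑ b : P, ∑ a : P, G c b a := Finset.sum_comm


end Aux

open Finset MvPowerSeries Equiv in
set_option maxHeartbeats 1600000 in
/-- `g(α,β,γ)` as a signed sum of contingency-array counts over
triples of permutations. -/
theorem stmt7 (ℓ n : ℕ) (hℓ : 1 ≤ ℓ)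
    (α β γ : Fin ℓ → ℕ)
    (hα : IsPartition α) (hβ : IsPartition β) (hγ : IsPartition γ)
    (hαs : ∑ i, α i = n) (hβs : ∑ i, β i = n) (hγs : ∑ i, γ i = n) :
    kron ℓ α β γ =
      ∑ σ₁ : Equiv.Perm (Fin ℓ), ∑ σ₂ : Equiv.Perm (Fin ℓ), ∑ σ₃ : Equiv.Perm (Fin ℓ),
        ((Equiv.Perm.sign σ₁ : ℤ) * (Equiv.Perm.sign σ₂ : ℤ) * (Equiv.Perm.sign σ₃ : ℤ)) *
          (contCount ℓ (fun i => (α i : ℤ) + (σ₁ i : ℕ) - (i : ℕ))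
            (fun j => (β j : ℤ) + (σ₂ j : ℕ) - (j : ℕ))
            (fun k => (γ k : ℤ) + (σ₃ k : ℕ) - (k : ℕ)) : ℤ) := by
  classical
  rw [kron]
  have hXe : vdm ℓ (Xv ℓ) = ∑ σ : Perm (Fin ℓ),
      (Perm.sign σ : ℤ) • ∏ i : Fin ℓ, Xv ℓ i ^ (ℓ - 1 - (σ i : ℕ)) := vdm_expand (Xv ℓ)
  have hYe : vdm ℓ (Yv ℓ) = ∑ σ : Perm (Fin ℓ),
      (Perm.sign σ : ℤ) • ∏ j : Fin ℓ, Yv ℓ j ^ (ℓ - 1 - (σ j : ℕ)) := vdm_expand (Yv ℓ)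
  have hZe : vdm ℓ (Zv ℓ) = ∑ σ : Perm (Fin ℓ),
      (Perm.sign σ : ℤ) • ∏ k : Fin ℓ, Zv ℓ k ^ (ℓ - 1 - (σ k : ℕ)) := vdm_expand (Zv ℓ)
  rw [hXe, hYe, hZe]
  have expand : ((∑ σ : Perm (Fin ℓ),
        (Perm.sign σ : ℤ) • ∏ i : Fin ℓ, Xv ℓ i ^ (ℓ - 1 - (σ i : ℕ))) *
      (∑ σ : Perm (Fin ℓ), (Perm.sign σ : ℤ) • ∏ j : Fin ℓ, Yv ℓ j ^ (ℓ - 1 - (σ j : ℕ))) *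
      (∑ σ : Perm (Fin ℓ), (Perm.sign σ : ℤ) • ∏ k : Fin ℓ, Zv ℓ k ^ (ℓ - 1 - (σ k : ℕ))) *
      cauchyKernel ℓ)
      = ∑ σ₁ : Perm (Fin ℓ), ∑ σ₂ : Perm (Fin ℓ), ∑ σ₃ : Perm (Fin ℓ),
          ((Perm.sign σ₁ : ℤ) * ((Perm.sign σ₂ : ℤ) * (Perm.sign σ₃ : ℤ))) •
            ((∏ i : Fin ℓ, Xv ℓ i ^ (ℓ - 1 - (σ₃ i : ℕ))) *
             (∏ j : Fin ℓ, Yv ℓ j ^ (ℓ - 1 - (σ₂ j : ℕ))) *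
             (∏ k : Fin ℓ, Zv ℓ k ^ (ℓ - 1 - (σ₁ k : ℕ))) * cauchyKernel ℓ) := by
    simp only [Finset.sum_mul, Finset.mul_sum]
    refine Finset.sum_congr rfl fun σ₁ _ => Finset.sum_congr rfl fun σ₂ _ =>
      Finset.sum_congr rfl fun σ₃ _ => ?_
    simp only [smul_mul_assoc, mul_smul_comm, smul_smul]
  rw [expand]
  have hsum : MvPowerSeries.coeff (kronExp ℓ α β γ)
      (∑ σ₁ : Perm (Fin ℓ), ∑ σ₂ : Perm (Fin ℓ), ∑ σ₃ : Perm (Fin ℓ),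
        ((Perm.sign σ₁ : ℤ) * ((Perm.sign σ₂ : ℤ) * (Perm.sign σ₃ : ℤ))) •
          ((∏ i : Fin ℓ, Xv ℓ i ^ (ℓ - 1 - (σ₃ i : ℕ))) *
           (∏ j : Fin ℓ, Yv ℓ j ^ (ℓ - 1 - (σ₂ j : ℕ))) *
           (∏ k : Fin ℓ, Zv ℓ k ^ (ℓ - 1 - (σ₁ k : ℕ))) * cauchyKernel ℓ))
      = ∑ σ₁ : Perm (Fin ℓ), ∑ σ₂ : Perm (Fin ℓ), ∑ σ₃ : Perm (Fin ℓ),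
          ((Perm.sign σ₃ : ℤ) * (Perm.sign σ₂ : ℤ) * (Perm.sign σ₁ : ℤ)) *
            (contCount ℓ (fun i => (α i : ℤ) + (σ₃ i : ℕ) - (i : ℕ))
              (fun j => (β j : ℤ) + (σ₂ j : ℕ) - (j : ℕ))
              (fun k => (γ k : ℤ) + (σ₁ k : ℕ) - (k : ℕ)) : ℤ) := by
    rw [map_sum]
    refine Finset.sum_congr rfl fun σ₁ _ => ?_
    rw [map_sum]
    refine Finset.sum_congr rfl fun σ₂ _ => ?_
    rw [map_sum]
    refine Finset.sum_congr rfl fun σ₃ _ => ?_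
    rw [triple_prod_monomial, map_smul, smul_eq_mul]
    rw [show kronExp ℓ α β γ = expVec3 ℓ (fun i => α i + (ℓ - 1 - (i : ℕ)))
      (fun j => β j + (ℓ - 1 - (j : ℕ))) (fun k => γ k + (ℓ - 1 - (k : ℕ))) from rfl]
    rw [coeff_monomial_mul, one_mul]
    by_cases hle : expVec3 ℓ (fun i => ℓ - 1 - (σ₃ i : ℕ)) (fun j => ℓ - 1 - (σ₂ j : ℕ))
        (fun k => ℓ - 1 - (σ₁ k : ℕ)) ≤ expVec3 ℓ (fun i => α i + (ℓ - 1 - (i : ℕ)))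
        (fun j => β j + (ℓ - 1 - (j : ℕ))) (fun k => γ k + (ℓ - 1 - (k : ℕ)))
    · rw [if_pos hle, expVec3_sub, coeff_cauchyKernel_expVec3]
      obtain ⟨h1, h2, h3⟩ := (expVec3_le_iff _ _ _ _ _ _).1 hle
      have hA : (fun i => ((α i + (ℓ - 1 - (i : ℕ)) - (ℓ - 1 - (σ₃ i : ℕ)) : ℕ) : ℤ))
          = (fun i => (α i : ℤ) + ((σ₃ i : ℕ) : ℤ) - ((i : ℕ) : ℤ)) := by
        funext i
        have h := h1 i; have hi := i.isLt; have hs := (σ₃ i).isLt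
        omega
      have hB : (fun j => ((β j + (ℓ - 1 - (j : ℕ)) - (ℓ - 1 - (σ₂ j : ℕ)) : ℕ) : ℤ))
          = (fun j => (β j : ℤ) + ((σ₂ j : ℕ) : ℤ) - ((j : ℕ) : ℤ)) := by
        funext j
        have h := h2 j; have hj := j.isLt; have hs := (σ₂ j).isLt
        omega
      have hC : (fun k => ((γ k + (ℓ - 1 - (k : ℕ)) - (ℓ - 1 - (σ₁ k : ℕ)) : ℕ) : ℤ))
          = (fun k => (γ k : ℤ) + ((σ₁ k : ℕ) : ℤ) - ((k : ℕ) : ℤ)) := by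
        funext k
        have h := h3 k; have hk := k.isLt; have hs := (σ₁ k).isLt
        omega
      rw [hA, hB, hC]
      ring
    · rw [if_neg hle, mul_zero]
      rw [expVec3_le_iff] at hle
      push_neg at hle
      have hzero : contCount ℓ (fun i => (α i : ℤ) + ((σ₃ i : ℕ) : ℤ) - ((i : ℕ) : ℤ))
          (fun j => (β j : ℤ) + ((σ₂ j : ℕ) : ℤ) - ((j : ℕ) : ℤ))
          (fun k => (γ k : ℤ) + ((σ₁ k : ℕ) : ℤ) - ((k : ℕ) : ℤ)) = 0 := by
        by_cases hca : ∀ i, ℓ - 1 - (σ₃ i : ℕ) ≤ α i + (ℓ - 1 - (i : ℕ))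
        · by_cases hcb : ∀ j, ℓ - 1 - (σ₂ j : ℕ) ≤ β j + (ℓ - 1 - (j : ℕ))
          · have hcc := hle hca hcb
            obtain ⟨k, hk⟩ := hcc
            refine contCount_eq_zero_c _ _ _ ⟨k, ?_⟩
            have hk' := k.isLt; have hs := (σ₁ k).isLt
            omega
          · push_neg at hcb
            obtain ⟨j, hj⟩ := hcb
            refine contCount_eq_zero_b _ _ _ ⟨j, ?_⟩
            have hj' := j.isLt; have hs := (σ₂ j).isLt
            omega
        · push_neg at hca
          obtain ⟨i, hi⟩ := hca
          refine contCount_eq_zero_a _ _ _ ⟨i, ?_⟩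
          have hi' := i.isLt; have hs := (σ₃ i).isLt
          omega
      rw [hzero]
      simp
  rw [hsum]
  exact triple_sum_swap (fun a b c : Perm (Fin ℓ) =>
    ((Perm.sign a : ℤ) * (Perm.sign b : ℤ) * (Perm.sign c : ℤ)) *
      (contCount ℓ (fun i => (α i : ℤ) + (a i : ℕ) - (i : ℕ))
        (fun j => (β j : ℤ) + (b j : ℕ) - (j : ℕ))
        (fun k => (γ k : ℤ) + (c k : ℕ) - (k : ℕ)) : ℤ))
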